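/- Let (S,d) be a nonempty compact geodesic metric space homeomorphic to the 2-sphere S², and let ν be a finite Borel measure on S with ν(S) > 0. Suppose δ > 0 is such that ν(B(z,δ)) ≤ ν(S)/2 for every z ∈ S. Then there exists r₀ > 0 such that for every r ∈ (0,r₀) and every z ∈ S there is exactly one connected component U of S ∖ B(z,r) of diameter at least δ/4, and this component satisfies ν(U) ≥ ν(S)/2. -/

import Mathlib

/-- A unit-speed geodesic `η : [0,T] → X`: `dist (η s) (η t) = |s - t|` for `s, t ∈ [0,T]`. -/
def IsUnitSpeedGeodesic {X : Type*} [MetricSpace X] (η : ℝ → X) (T : ℝ) : Prop :=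
  ∀ s ∈ Set.Icc (0 : ℝ) T, ∀ t ∈ Set.Icc (0 : ℝ) T, dist (η s) (η t) = |s - t|

open Set Metric

section helpers
variable {S : Type*} [MetricSpace S]

lemma geodesic_continuousOn {η : ℝ → S} {T : ℝ} (h : IsUnitSpeedGeodesic η T) :
    ContinuousOn η (Set.Icc 0 T) := by
  have : LipschitzOnWith 1 η (Set.Icc 0 T) := by
    apply LipschitzOnWith.of_dist_le_mul
    intro s hs t ht
    rw [h s hs t ht, Real.dist_eq]
    simp
  exact this.continuousOn

lemma exists_path_of_geodesic {x y : S} {η : ℝ → S}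
    (h : IsUnitSpeedGeodesic η (dist x y)) (h0 : η 0 = x) (h1 : η (dist x y) = y) :
    ∃ p : Path x y, ∀ t, dist x (p t) ≤ dist x y := by
  set D := dist x y with hD
  have hD0 : 0 ≤ D := dist_nonneg
  have hmaps : ∀ t : unitInterval, (t : ℝ) * D ∈ Set.Icc (0:ℝ) D := by
    intro t
    constructor
    · exact mul_nonneg t.2.1 hD0
    · calc (t : ℝ) * D ≤ 1 * D := mul_le_mul_of_nonneg_right t.2.2 hD0
        _ = D := one_mul D
  have hcont : Continuous fun t : unitInterval => η ((t : ℝ) * D) := by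
    apply (geodesic_continuousOn h).comp_continuous
    · exact (continuous_subtype_val.mul continuous_const)
    · exact hmaps
  refine ⟨⟨⟨fun t => η ((t : ℝ) * D), hcont⟩, by simp [h0], by simp [h1]⟩, ?_⟩
  intro t
  have := h 0 ⟨le_refl 0, hD0⟩ ((t : ℝ) * D) (hmaps t)
  rw [h0] at this
  simp only [Path.coe_mk_mk]
  rw [this, zero_sub, abs_neg, abs_of_nonneg (mul_nonneg t.2.1 hD0)]
  calc (t : ℝ) * D ≤ 1 * D := mul_le_mul_of_nonneg_right t.2.2 hD0
    _ = D := one_mul D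

lemma locPathConnected_of_geo
    (hgeo : ∀ x y : S, ∃ η : ℝ → S,
      IsUnitSpeedGeodesic η (dist x y) ∧ η 0 = x ∧ η (dist x y) = y) :
    LocallyPathConnectedSpace S := by
  apply LocallyPathConnectedSpace.of_bases (fun x => Metric.nhds_basis_ball)
  intro x ε hε
  refine ⟨x, mem_ball_self hε, ?_⟩
  intro y hy
  obtain ⟨η, hη, h0, h1⟩ := hgeo x y
  obtain ⟨p, hp⟩ := exists_path_of_geodesic hη h0 h1
  refine ⟨p, fun t => ?_⟩
  have : dist x (p t) ≤ dist x y := hp t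
  rw [mem_ball']
  exact lt_of_le_of_lt this (mem_ball'.mp hy)

end helpers

lemma isConnected_compl_singleton_sphere
    (v : Metric.sphere (0 : EuclideanSpace ℝ (Fin 3)) 1) :
    IsConnected ({v}ᶜ : Set (Metric.sphere (0 : EuclideanSpace ℝ (Fin 3)) 1)) := by
  haveI : Fact (Module.finrank ℝ (EuclideanSpace ℝ (Fin 3)) = 2 + 1) :=
    ⟨by simp [finrank_euclideanSpace_fin]⟩
  have hsrc : (stereographic' 2 v).source = ({v}ᶜ : Set _) := stereographic'_source v
  have htgt : (stereographic' 2 v).target = Set.univ := stereographic'_target v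
  rw [← hsrc, isConnected_iff_connectedSpace]
  have e := (stereographic' 2 v).toHomeomorphSourceTarget
  haveI : ConnectedSpace (stereographic' 2 v).target := by
    rw [htgt]
    exact (Homeomorph.Set.univ (EuclideanSpace ℝ (Fin 2))).symm.surjective.connectedSpace
      (Homeomorph.Set.univ (EuclideanSpace ℝ (Fin 2))).symm.continuous
  exact e.symm.surjective.connectedSpace e.symm.continuous

section lemA
variable {S : Type*} [MetricSpace S]

lemma geodesic_dist_bound {x y : S} {η : ℝ → S} (h : IsUnitSpeedGeodesic η (dist x y))
    (h0 : η 0 = x) {w : S} (hw : w ∈ η '' Set.Icc 0 (dist x y)) : dist x w ≤ dist x y := by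
  obtain ⟨t, ht, rfl⟩ := hw
  have := h 0 ⟨le_refl 0, dist_nonneg⟩ t ⟨ht.1, ht.2⟩
  rw [h0] at this
  rw [this, zero_sub, abs_neg, abs_of_nonneg ht.1]
  exact ht.2

lemma lemA [CompactSpace S]
    (hgeo : ∀ x y : S, ∃ η : ℝ → S,
      IsUnitSpeedGeodesic η (dist x y) ∧ η 0 = x ∧ η (dist x y) = y)
    (hconn : ∀ z : S, IsConnected ({z}ᶜ : Set S))
    {δ : ℝ} (hδ : 0 < δ) :
    ∃ r₀ > (0:ℝ), ∀ r ∈ Set.Ioo (0:ℝ) r₀, ∀ z x y : S,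
      δ/16 ≤ dist z x → δ/16 ≤ dist z y →
      connectedComponentIn (Metric.ball z r)ᶜ x = connectedComponentIn (Metric.ball z r)ᶜ y := by
  haveI := locPathConnected_of_geo hgeo
  by_contra hcon
  push_neg at hcon
  have H : ∀ n : ℕ, ∃ r : ℝ, ∃ z x y : S, r ∈ Set.Ioo (0:ℝ) (1/(n+1)) ∧
      δ/16 ≤ dist z x ∧ δ/16 ≤ dist z y ∧
      connectedComponentIn (Metric.ball z r)ᶜ x ≠ connectedComponentIn (Metric.ball z r)ᶜ y := by
    intro n
    obtain ⟨r, hr, z, x, y, h1, h2, h3⟩ := hcon (1/(n+1)) (by positivity)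
    exact ⟨r, z, x, y, hr, h1, h2, h3⟩
  choose r z x y hr hzx hzy hne using H
  obtain ⟨a, φ1, hφ1, ha⟩ := CompactSpace.tendsto_subseq z
  obtain ⟨b, φ2, hφ2, hb⟩ := CompactSpace.tendsto_subseq (x ∘ φ1)
  obtain ⟨c, φ3, hφ3, hc⟩ := CompactSpace.tendsto_subseq (y ∘ φ1 ∘ φ2)
  set ψ : ℕ → ℕ := φ1 ∘ φ2 ∘ φ3 with hψ
  have hψmono : StrictMono ψ := hφ1.comp (hφ2.comp hφ3)
  have haz : Filter.Tendsto (fun n => z (ψ n)) Filter.atTop (nhds a) :=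
    ha.comp ((hφ2.comp hφ3).tendsto_atTop)
  have hbx : Filter.Tendsto (fun n => x (ψ n)) Filter.atTop (nhds b) :=
    hb.comp (hφ3.tendsto_atTop)
  have hcy : Filter.Tendsto (fun n => y (ψ n)) Filter.atTop (nhds c) := hc
  -- limit distances
  have hab : δ/16 ≤ dist a b :=
    ge_of_tendsto (haz.dist hbx) (Filter.Eventually.of_forall fun n => hzx (ψ n))
  have hac : δ/16 ≤ dist a c :=
    ge_of_tendsto (haz.dist hcy) (Filter.Eventually.of_forall fun n => hzy (ψ n))
  -- path from b to c avoiding a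
  have hbmem : b ∈ ({a}ᶜ : Set S) := by
    simp only [Set.mem_compl_iff, Set.mem_singleton_iff]
    intro hba; rw [hba] at hab; rw [dist_self] at hab; linarith
  have hcmem : c ∈ ({a}ᶜ : Set S) := by
    simp only [Set.mem_compl_iff, Set.mem_singleton_iff]
    intro hca; rw [hca] at hac; rw [dist_self] at hac; linarith
  have hpc : IsPathConnected ({a}ᶜ : Set S) :=
    (isOpen_compl_singleton.isConnected_iff_isPathConnected).mp (hconn a)
  obtain ⟨p, hp⟩ := hpc.joinedIn b hbmem c hcmem
  set C : Set S := Set.range p with hC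
  have haC : a ∉ C := by
    rintro ⟨t, ht⟩
    exact (hp t) ht
  have hCcompact : IsCompact C := isCompact_range p.continuous
  have hCne : C.Nonempty := ⟨b, 0, p.source⟩
  set ε : ℝ := Metric.infDist a C with hε
  have hεpos : 0 < ε := by
    obtain ⟨w, hwC, hwd⟩ := hCcompact.exists_infDist_eq_dist hCne a
    rw [hε, hwd]
    rw [dist_pos]
    intro haw; exact haC (haw ▸ hwC)
  have hεle : ∀ w ∈ C, ε ≤ dist a w := fun w hw => Metric.infDist_le_dist_of_mem hw
  -- choose n large
  set ε' : ℝ := min (ε/2) (δ/64) with hε'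
  have hε'pos : 0 < ε' := lt_min (by positivity) (by positivity)
  obtain ⟨N₁, hN₁⟩ := Metric.tendsto_atTop.mp haz ε' hε'pos
  obtain ⟨N₂, hN₂⟩ := Metric.tendsto_atTop.mp hbx (δ/64) (by positivity)
  obtain ⟨N₃, hN₃⟩ := Metric.tendsto_atTop.mp hcy (δ/64) (by positivity)
  obtain ⟨M, hM⟩ := exists_nat_one_div_lt hε'pos
  set n : ℕ := max (max N₁ N₂) (max N₃ M) with hn
  have h1 : dist (z (ψ n)) a < ε' := hN₁ n (le_trans (le_max_left _ _) (le_max_left _ _))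
  have h2 : dist (x (ψ n)) b < δ/64 := hN₂ n (le_trans (le_max_right _ _) (le_max_left _ _))
  have h3 : dist (y (ψ n)) c < δ/64 := hN₃ n (le_trans (le_max_left _ _) (le_max_right _ _))
  have hrn : r (ψ n) < ε' := by
    have h4 : (1:ℝ)/(ψ n + 1) ≤ 1/(n+1) := by
      apply one_div_le_one_div_of_le (by positivity)
      have h6 : n ≤ ψ n := hψmono.le_apply
      have : (n:ℝ) ≤ (ψ n : ℝ) := by exact_mod_cast h6
      linarith
    have h5 : (1:ℝ)/(n+1) ≤ 1/(M+1) := by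
      apply one_div_le_one_div_of_le (by positivity)
      have : (M:ℝ) ≤ n := by
        exact_mod_cast le_trans (le_max_right _ _) (le_max_right _ _)
      linarith
    calc r (ψ n) < 1/(ψ n + 1) := (hr (ψ n)).2
      _ ≤ 1/(n+1) := h4
      _ ≤ 1/(M+1) := h5
      _ < ε' := hM
  have hrn64 : r (ψ n) < δ/64 := lt_of_lt_of_le hrn (min_le_right _ _)
  have hrnε : r (ψ n) < ε/2 := lt_of_lt_of_le hrn (min_le_left _ _)
  set rn := r (ψ n)
  set zn := z (ψ n)
  set xn := x (ψ n)
  set yn := y (ψ n)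
  set K : Set S := (Metric.ball zn rn)ᶜ with hKdef
  -- geodesic pieces
  obtain ⟨η₁, hη₁, e₁0, e₁1⟩ := hgeo xn b
  obtain ⟨η₂, hη₂, e₂0, e₂1⟩ := hgeo c yn
  set A₁ : Set S := η₁ '' Set.Icc 0 (dist xn b) with hA₁
  set A₂ : Set S := η₂ '' Set.Icc 0 (dist c yn) with hA₂
  have hA₁conn : IsPreconnected A₁ :=
    isPreconnected_Icc.image η₁ (geodesic_continuousOn hη₁)
  have hA₂conn : IsPreconnected A₂ :=
    isPreconnected_Icc.image η₂ (geodesic_continuousOn hη₂)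
  have hCconn : IsPreconnected C := (isPreconnected_range p.continuous)
  have hxnA₁ : xn ∈ A₁ := ⟨0, ⟨le_refl 0, dist_nonneg⟩, e₁0⟩
  have hbA₁ : b ∈ A₁ := ⟨dist xn b, ⟨dist_nonneg, le_refl _⟩, e₁1⟩
  have hcA₂ : c ∈ A₂ := ⟨0, ⟨le_refl 0, dist_nonneg⟩, e₂0⟩
  have hynA₂ : yn ∈ A₂ := ⟨dist c yn, ⟨dist_nonneg, le_refl _⟩, e₂1⟩
  have hbC : b ∈ C := ⟨0, p.source⟩
  have hcC : c ∈ C := ⟨1, p.target⟩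
  -- subsets of K
  have hznxn : δ/16 ≤ dist zn xn := hzx (ψ n)
  have hznyn : δ/16 ≤ dist zn yn := hzy (ψ n)
  have hA₁K : A₁ ⊆ K := by
    intro w hw
    have hxw : dist xn w ≤ dist xn b := geodesic_dist_bound hη₁ e₁0 hw
    have hxb : dist xn b ≤ δ/64 := le_of_lt h2
    simp only [hKdef, Set.mem_compl_iff, Metric.mem_ball, not_lt]
    have : dist zn xn ≤ dist zn w + dist w xn := dist_triangle _ _ _
    rw [dist_comm w zn]
    rw [dist_comm w xn] at this
    have hxw' : dist xn w ≤ δ/64 := le_trans hxw hxb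
    linarith [hrn64]
  have hA₂K : A₂ ⊆ K := by
    intro w hw
    have hcw : dist c w ≤ dist c yn := geodesic_dist_bound hη₂ e₂0 hw
    have hcyn : dist c yn ≤ δ/64 := by
      rw [dist_comm]; exact le_of_lt h3
    simp only [hKdef, Set.mem_compl_iff, Metric.mem_ball, not_lt]
    rw [dist_comm w zn]
    have t1 : dist zn yn ≤ dist zn w + dist w c + dist c yn := by
      calc dist zn yn ≤ dist zn w + dist w yn := dist_triangle _ _ _
        _ ≤ dist zn w + (dist w c + dist c yn) := by linarith [dist_triangle w c yn]
        _ = dist zn w + dist w c + dist c yn := by ring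
    rw [dist_comm w c] at t1
    have hcw' : dist c w ≤ δ/64 := le_trans hcw hcyn
    linarith [hrn64]
  have hCK : C ⊆ K := by
    intro w hw
    simp only [hKdef, Set.mem_compl_iff, Metric.mem_ball, not_lt]
    rw [dist_comm w zn]
    have t1 : ε ≤ dist a w := hεle w hw
    have t2 : dist a w ≤ dist a zn + dist zn w := dist_triangle _ _ _
    rw [dist_comm a zn] at t2
    have hε'le : ε' ≤ ε/2 := min_le_left _ _
    have := h1
    linarith [hrnε]
  -- union is connected
  have hTconn : IsPreconnected (A₁ ∪ (C ∪ A₂)) := by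
    apply IsPreconnected.union b hbA₁ (Set.mem_union_left _ hbC) hA₁conn
    exact IsPreconnected.union c hcC hcA₂ hCconn hA₂conn
  have hTK : A₁ ∪ (C ∪ A₂) ⊆ K := by
    intro w hw
    rcases hw with hw | hw | hw
    exacts [hA₁K hw, hCK hw, hA₂K hw]
  have hxnT : xn ∈ A₁ ∪ (C ∪ A₂) := Set.mem_union_left _ hxnA₁
  have hynT : yn ∈ A₁ ∪ (C ∪ A₂) := Set.mem_union_right _ (Set.mem_union_right _ hynA₂)
  have hsub : A₁ ∪ (C ∪ A₂) ⊆ connectedComponentIn K xn :=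
    hTconn.subset_connectedComponentIn hxnT hTK
  have h7 := connectedComponentIn_eq (hsub hynT)
  exact (hne (ψ n)) h7

end lemA

lemma conn_compl_of_sphere {S : Type*} [MetricSpace S]
    (e : S ≃ₜ Metric.sphere (0 : EuclideanSpace ℝ (Fin 3)) 1) (z : S) :
    IsConnected ({z}ᶜ : Set S) := by
  have h := isConnected_compl_singleton_sphere (e z)
  have himg : e.symm '' ({e z}ᶜ) = ({z}ᶜ : Set S) := by
    ext w
    simp only [Set.mem_image, Set.mem_compl_iff, Set.mem_singleton_iff]
    constructor
    · rintro ⟨u, hu, hw⟩ hwz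
      rw [hwz] at hw
      apply hu
      have : e (e.symm u) = e z := congrArg e hw
      rwa [e.apply_symm_apply] at this
    · intro hw
      refine ⟨e w, ?_, e.symm_apply_apply w⟩
      intro hew
      exact hw (e.injective hew)
  rw [← himg]
  exact h.image _ e.symm.continuous.continuousOn

lemma measurableSet_connectedComponentIn' {S : Type*} [MetricSpace S] [CompactSpace S]
    [MeasurableSpace S] [BorelSpace S] {K : Set S} (hK : IsClosed K) {u : S} (hu : u ∈ K) :
    MeasurableSet (connectedComponentIn K u) := by
  haveI : CompactSpace K := isCompact_iff_compactSpace.mp hK.isCompact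
  rw [connectedComponentIn_eq_image hu]
  have h1 : IsClosed (connectedComponent (⟨u, hu⟩ : K)) := isClosed_connectedComponent
  have h2 : IsCompact (connectedComponent (⟨u, hu⟩ : K)) := h1.isCompact
  exact ((h2.image continuous_subtype_val).isClosed).measurableSet

lemma geodesic_dist_eq {z x : S} [MetricSpace S] {η : ℝ → S}
    (h : IsUnitSpeedGeodesic η (dist z x)) (h0 : η 0 = z) {t : ℝ}
    (ht : t ∈ Set.Icc 0 (dist z x)) : dist z (η t) = t := by
  have := h 0 ⟨le_refl 0, dist_nonneg⟩ t ht
  rw [h0] at this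
  rw [this, zero_sub, abs_neg, abs_of_nonneg ht.1]

/-- In a nonempty compact geodesic metric space homeomorphic to the 2-sphere, carrying a finite
Borel measure `ν` with `ν(S) > 0`, if `δ > 0` is such that `ν(B(z,δ)) ≤ ν(S)/2` for every `z`,
then there is `r₀ > 0` so that for each `r ∈ (0,r₀)` and each `z`, exactly one connected
component `U` of `S \ B(z,r)` has diameter at least `δ/4`, and it satisfies `ν(U) ≥ ν(S)/2`. -/
theorem unique_big_component_large_measure {S : Type*} [MetricSpace S] [Nonempty S]
    [CompactSpace S] [MeasurableSpace S] [BorelSpace S]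
    (hgeo : ∀ x y : S, ∃ η : ℝ → S,
      IsUnitSpeedGeodesic η (dist x y) ∧ η 0 = x ∧ η (dist x y) = y)
    (hsphere : Nonempty (S ≃ₜ Metric.sphere (0 : EuclideanSpace ℝ (Fin 3)) 1))
    (ν : MeasureTheory.Measure S) [MeasureTheory.IsFiniteMeasure ν]
    (hν : 0 < ν Set.univ)
    (δ : ℝ) (hδ : 0 < δ)
    (hball : ∀ z : S, ν (Metric.ball z δ) ≤ ν Set.univ / 2) :
    ∃ r₀ > (0 : ℝ), ∀ r ∈ Set.Ioo (0 : ℝ) r₀, ∀ z : S,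
      ∃ U : Set S,
        ((∃ u ∈ (Metric.ball z r)ᶜ, U = connectedComponentIn (Metric.ball z r)ᶜ u) ∧
          δ / 4 ≤ Metric.diam U) ∧
        ν Set.univ / 2 ≤ ν U ∧
        ∀ V : Set S,
          ((∃ v ∈ (Metric.ball z r)ᶜ, V = connectedComponentIn (Metric.ball z r)ᶜ v) ∧
            δ / 4 ≤ Metric.diam V) → V = U := by
  obtain ⟨e⟩ := hsphere
  have hconn : ∀ z : S, IsConnected ({z}ᶜ : Set S) := fun z => conn_compl_of_sphere e z
  obtain ⟨r₁, hr₁, hA⟩ := lemA hgeo hconn hδ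
  refine ⟨min r₁ (δ/16), lt_min hr₁ (by positivity), ?_⟩
  rintro r ⟨hr0, hrlt⟩ z
  have hrr₁ : r < r₁ := lt_of_lt_of_le hrlt (min_le_left _ _)
  have hrδ16 : r < δ/16 := lt_of_lt_of_le hrlt (min_le_right _ _)
  set K : Set S := (Metric.ball z r)ᶜ with hKdef
  have hKclosed : IsClosed K := Metric.isOpen_ball.isClosed_compl
  -- a point at distance ≥ δ
  have hfar : ∃ x : S, δ ≤ dist z x := by
    by_contra h
    push_neg at h
    have hsub : (Set.univ : Set S) ⊆ Metric.ball z δ := by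
      intro w _
      rw [Metric.mem_ball, dist_comm]
      exact h w
    have h2 : ν Set.univ ≤ ν Set.univ / 2 :=
      le_trans (MeasureTheory.measure_mono hsub) (hball z)
    have h3 : ν Set.univ / 2 < ν Set.univ :=
      ENNReal.half_lt_self hν.ne' (MeasureTheory.measure_ne_top ν _)
    exact absurd h2 (not_le.mpr h3)
  obtain ⟨x, hxd⟩ := hfar
  have hxK : x ∈ K := by
    simp only [hKdef, Set.mem_compl_iff, Metric.mem_ball, not_lt]
    rw [dist_comm]
    linarith
  set U : Set S := connectedComponentIn K x with hU
  -- uniqueness principle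
  have huniq : ∀ w ∈ K, δ/16 ≤ dist z w → connectedComponentIn K w = U := by
    intro w _ hdw
    exact hA r ⟨hr0, hrr₁⟩ z w x hdw (by linarith)
  -- diameter of U
  have hdiamU : δ/4 ≤ Metric.diam U := by
    obtain ⟨η, hη, h0, h1⟩ := hgeo z x
    have hrD : r ≤ dist z x := by linarith
    have hmemr : η r ∈ U ∧ x ∈ U := by
      have hsubA : η '' Set.Icc r (dist z x) ⊆ U := by
        apply IsPreconnected.subset_connectedComponentIn
        · exact isPreconnected_Icc.image η ((geodesic_continuousOn hη).mono
            (Set.Icc_subset_Icc_left (le_of_lt hr0)))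
        · exact ⟨dist z x, ⟨hrD, le_refl _⟩, h1⟩
        · intro w hw
          obtain ⟨t, ht, rfl⟩ := hw
          have : dist z (η t) = t := geodesic_dist_eq hη h0 ⟨le_trans (le_of_lt hr0) ht.1, ht.2⟩
          simp only [hKdef, Set.mem_compl_iff, Metric.mem_ball, not_lt]
          rw [dist_comm, this]
          exact ht.1
      exact ⟨hsubA ⟨r, ⟨le_refl r, hrD⟩, rfl⟩, hsubA ⟨dist z x, ⟨hrD, le_refl _⟩, h1⟩⟩
    have hbdd : Bornology.IsBounded U := (isCompact_univ.isBounded).subset (Set.subset_univ U)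
    have hdd : dist (η r) x ≤ Metric.diam U :=
      Metric.dist_le_diam_of_mem hbdd hmemr.1 hmemr.2
    have hder : dist z (η r) = r := geodesic_dist_eq hη h0 ⟨le_of_lt hr0, hrD⟩
    have : dist z x ≤ dist z (η r) + dist (η r) x := dist_triangle _ _ _
    rw [hder] at this
    linarith
  -- measure of U
  have hUmeas : MeasurableSet U := measurableSet_connectedComponentIn' hKclosed hxK
  have hcompl : Uᶜ ⊆ Metric.ball z δ := by
    intro w hw
    rw [Metric.mem_ball, dist_comm]
    by_contra hcon
    push_neg at hcon
    have hwK : w ∈ K := by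
      simp only [hKdef, Set.mem_compl_iff, Metric.mem_ball, not_lt]
      rw [dist_comm]
      linarith
    have := huniq w hwK (by linarith)
    exact hw (this ▸ mem_connectedComponentIn hwK)
  have hνU : ν Set.univ / 2 ≤ ν U := by
    have h1 : ν Uᶜ ≤ ν Set.univ / 2 :=
      le_trans (MeasureTheory.measure_mono hcompl) (hball z)
    have h2 : ν U + ν Uᶜ = ν Set.univ := MeasureTheory.measure_add_measure_compl hUmeas
    have h3 : ν Set.univ / 2 + ν Set.univ / 2 = ν Set.univ := ENNReal.add_halves _
    have htop : ν Set.univ / 2 ≠ ⊤ :=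
      ne_top_of_le_ne_top (MeasureTheory.measure_ne_top ν _) ENNReal.half_le_self
    have h4 : ν Set.univ / 2 + ν Set.univ / 2 ≤ ν U + ν Set.univ / 2 := by
      rw [h3]
      calc ν Set.univ = ν U + ν Uᶜ := h2.symm
        _ ≤ ν U + ν Set.univ / 2 := add_le_add_right h1 _
    exact (ENNReal.add_le_add_iff_right htop).mp h4
  refine ⟨U, ⟨⟨x, hxK, rfl⟩, hdiamU⟩, hνU, ?_⟩
  rintro V ⟨⟨v, hvK, rfl⟩, hdiamV⟩
  -- find a far point in V
  have hVw : ∃ w ∈ connectedComponentIn K v, δ/16 ≤ dist z w := by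
    by_contra h
    push_neg at h
    have hle : Metric.diam (connectedComponentIn K v) ≤ δ/8 := by
      apply Metric.diam_le_of_forall_dist_le (by positivity)
      intro w1 hw1 w2 hw2
      have := h w1 hw1
      have := h w2 hw2
      calc dist w1 w2 ≤ dist w1 z + dist z w2 := dist_triangle _ _ _
        _ ≤ δ/16 + δ/16 := by
            rw [dist_comm w1 z]
            exact add_le_add (le_of_lt (h w1 hw1)) (le_of_lt (h w2 hw2))
        _ = δ/8 := by ring
    linarith
  obtain ⟨w, hwV, hwd⟩ := hVw
  have hwK : w ∈ K := connectedComponentIn_subset K v hwV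
  have h5 : connectedComponentIn K v = connectedComponentIn K w :=
    connectedComponentIn_eq hwV
  rw [h5]
  exact huniq w hwK hwd
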